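/- arXiv:1311.5048 — 5 statements merged into one kernel-verified Lean document; each statement's English description precedes it below -/
import Mathlib

section
/- Let G be a finite graph on vertex set V. The minimum over all nonzero line metrics ℓ on V of (Σ_{{u,v} ∈ E} ℓ(u,v)) / (Σ_{{u,v} ∈ binom(V,2)} ℓ(u,v)) is attained by a cut metric, and hence equals the edge sparsity of G. -/
open Finset

/-- For a line metric `ℓ(u,v) = |f(u)-f(v)|` given by `f : V → ℝ`, the sum of `ℓ`
over (unordered) edges of `G`, counted via ordered pairs divided by 2. -/
noncomputable def lineMetricEdgeSum {V : Type*} [Fintype V] [DecidableEq V]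
    (G : SimpleGraph V) [DecidableRel G.Adj] (f : V → ℝ) : ℝ :=
  (∑ p : V × V, if G.Adj p.1 p.2 then |f p.1 - f p.2| else 0) / 2

/-- The sum of the line metric over all unordered pairs of distinct vertices. -/
noncomputable def lineMetricPairSum {V : Type*} [Fintype V] [DecidableEq V]
    (f : V → ℝ) : ℝ :=
  (∑ p : V × V, if p.1 ≠ p.2 then |f p.1 - f p.2| else 0) / 2

/-- The number of edges of `G` between `A` and its complement. -/
def cutEdgeCard' {V : Type*} [Fintype V] [DecidableEq V]
    (G : SimpleGraph V) [DecidableRel G.Adj] (A : Finset V) : ℕ :=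
  (Finset.univ.filter fun p : V × V => p.1 ∈ A ∧ p.2 ∉ A ∧ G.Adj p.1 p.2).card

section Aux

open MeasureTheory

variable {V : Type*} [Fintype V] [DecidableEq V] (G : SimpleGraph V) [DecidableRel G.Adj]

/-- characteristic function of a cut -/
noncomputable def cfAux (A : Finset V) : V → ℝ := fun v => if v ∈ A then 1 else 0

omit [Fintype V] in
lemma abs_cfAux (A : Finset V) (u v : V) :
    |cfAux A u - cfAux A v| = if (u ∈ A ∧ v ∉ A) ∨ (v ∈ A ∧ u ∉ A) then 1 else 0 := by
  unfold cfAux; by_cases hu : u ∈ A <;> by_cases hv : v ∈ A <;> simp [hu, hv]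

lemma edgeSum_cfAux (A : Finset V) :
    lineMetricEdgeSum G (cfAux A) = (cutEdgeCard' G A : ℝ) := by
  have key : (∑ p : V × V, if G.Adj p.1 p.2 then |cfAux A p.1 - cfAux A p.2| else 0)
      = 2 * (cutEdgeCard' G A : ℝ) := by
    have : ∀ p : V × V, (if G.Adj p.1 p.2 then |cfAux A p.1 - cfAux A p.2| else 0)
        = (if p.1 ∈ A ∧ p.2 ∉ A ∧ G.Adj p.1 p.2 then (1:ℝ) else 0)
          + (if p.2 ∈ A ∧ p.1 ∉ A ∧ G.Adj p.1 p.2 then (1:ℝ) else 0) := by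
      intro p
      rw [abs_cfAux]
      by_cases h : G.Adj p.1 p.2 <;> by_cases h1 : p.1 ∈ A <;> by_cases h2 : p.2 ∈ A <;>
        simp [h, h1, h2]
    rw [Finset.sum_congr rfl (fun p _ => this p), Finset.sum_add_distrib]
    rw [Finset.sum_boole, Finset.sum_boole]
    have hswap : (Finset.univ.filter fun p : V × V => p.2 ∈ A ∧ p.1 ∉ A ∧ G.Adj p.1 p.2).card
        = cutEdgeCard' G A := by
      unfold cutEdgeCard'
      apply Finset.card_bij (fun p _ => (p.2, p.1))
      · intro p hp; simp only [Finset.mem_filter, Finset.mem_univ, true_and] at hp ⊢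
        exact ⟨hp.1, hp.2.1, hp.2.2.symm⟩
      · intro p hp q hq h; exact Prod.ext (congrArg Prod.snd h) (congrArg Prod.fst h)
      · intro p hp; simp only [Finset.mem_filter, Finset.mem_univ, true_and] at hp ⊢
        exact ⟨(p.2, p.1), ⟨hp.1, hp.2.1, hp.2.2.symm⟩, rfl⟩
    rw [hswap]; unfold cutEdgeCard'; ring
  unfold lineMetricEdgeSum; rw [key]; ring

lemma pairSum_cfAux (A : Finset V) :
    lineMetricPairSum (cfAux A) = (A.card : ℝ) * ((Aᶜ : Finset V).card : ℝ) := by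
  have key : (∑ p : V × V, if p.1 ≠ p.2 then |cfAux A p.1 - cfAux A p.2| else 0)
      = 2 * ((A.card : ℝ) * ((Aᶜ : Finset V).card : ℝ)) := by
    have : ∀ p : V × V, (if p.1 ≠ p.2 then |cfAux A p.1 - cfAux A p.2| else 0)
        = (if p.1 ∈ A ∧ p.2 ∉ A then (1:ℝ) else 0)
          + (if p.2 ∈ A ∧ p.1 ∉ A then (1:ℝ) else 0) := by
      intro p
      by_cases h : p.1 = p.2
      · simp [h, if_neg (not_not_intro h)]
      · rw [if_pos h, abs_cfAux]
        by_cases h1 : p.1 ∈ A <;> by_cases h2 : p.2 ∈ A <;> simp [h1, h2]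
    rw [Finset.sum_congr rfl (fun p _ => this p), Finset.sum_add_distrib]
    rw [Finset.sum_boole, Finset.sum_boole]
    have h1 : (Finset.univ.filter fun p : V × V => p.1 ∈ A ∧ p.2 ∉ A) = A ×ˢ Aᶜ := by
      ext p; simp [Finset.mem_product]
    have h2 : (Finset.univ.filter fun p : V × V => p.2 ∈ A ∧ p.1 ∉ A) = Aᶜ ×ˢ A := by
      ext p; simp [Finset.mem_product, and_comm]
    rw [h1, h2, Finset.card_product, Finset.card_product]
    push_cast; ring
  unfold lineMetricPairSum; rw [key]; ring

lemma integrable_indAux (a b : ℝ) : Integrable (Set.indicator (Set.Ico a b) (1 : ℝ → ℝ)) := by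
  rw [integrable_indicator_iff measurableSet_Ico]
  exact integrableOn_const (by rw [Real.volume_Ico]; exact ENNReal.ofReal_ne_top)

lemma integral_indAux (a b : ℝ) :
    ∫ t, Set.indicator (Set.Ico (min a b) (max a b)) (1 : ℝ → ℝ) t = |a - b| := by
  rw [integral_indicator_one measurableSet_Ico, Real.volume_real_Ico,
    max_eq_left (by simp [min_le_max] : (0:ℝ) ≤ max a b - min a b)]
  rw [max_sub_min_eq_abs, abs_sub_comm]

lemma mem_Ico_iffAux (a b t : ℝ) :
    t ∈ Set.Ico (min a b) (max a b) ↔ ((a ≤ t ∧ ¬ b ≤ t) ∨ (b ≤ t ∧ ¬ a ≤ t)) := by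
  simp only [Set.mem_Ico, min_le_iff, lt_max_iff, not_le]
  constructor
  · rintro ⟨h1 | h1, h2 | h2⟩
    · linarith
    · exact Or.inl ⟨h1, h2⟩
    · exact Or.inr ⟨h1, h2⟩
    · linarith
  · rintro (⟨h1, h2⟩ | ⟨h1, h2⟩)
    · exact ⟨Or.inl h1, Or.inr h2⟩
    · exact ⟨Or.inr h1, Or.inl h2⟩

/-- The key inequality: if `r` is a lower bound for all cut ratios (in product form),
then `r` is a lower bound for the line-metric ratio of any `f`. -/
lemma key_ineqAux (f : V → ℝ) (r : ℝ)
    (hr : ∀ A : Finset V,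
      r * ((A.card : ℝ) * ((Aᶜ : Finset V).card : ℝ)) ≤ (cutEdgeCard' G A : ℝ)) :
    r * lineMetricPairSum f ≤ lineMetricEdgeSum G f := by
  classical
  set F : ℝ → Finset V := fun t => univ.filter (fun v => f v ≤ t) with hF
  have stepA : ∀ (t : ℝ) (u v : V), |cfAux (F t) u - cfAux (F t) v|
      = Set.indicator (Set.Ico (min (f u) (f v)) (max (f u) (f v))) (1 : ℝ → ℝ) t := by
    intro t u v
    have hu : cfAux (F t) u = if f u ≤ t then 1 else 0 := by simp [cfAux, hF]
    have hv : cfAux (F t) v = if f v ≤ t then 1 else 0 := by simp [cfAux, hF]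
    rw [Set.indicator_apply, hu, hv]
    by_cases h1 : f u ≤ t <;> by_cases h2 : f v ≤ t
    · simp [h1, h2, mem_Ico_iffAux, not_lt.2 h1, not_lt.2 h2]
    · simp [h1, h2, mem_Ico_iffAux, not_le.1 h2]
    · simp [h1, h2, mem_Ico_iffAux, not_le.1 h1]
    · simp [h1, h2, mem_Ico_iffAux]
  set ge : ℝ → ℝ := fun t => ∑ p : V × V, if G.Adj p.1 p.2 then
      Set.indicator (Set.Ico (min (f p.1) (f p.2)) (max (f p.1) (f p.2))) (1 : ℝ → ℝ) t
      else 0 with hge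
  set gp : ℝ → ℝ := fun t => ∑ p : V × V, if p.1 ≠ p.2 then
      Set.indicator (Set.Ico (min (f p.1) (f p.2)) (max (f p.1) (f p.2))) (1 : ℝ → ℝ) t
      else 0 with hgp
  have intge : Integrable ge := integrable_finset_sum _ (fun p _ => by
    by_cases h : G.Adj p.1 p.2 <;> simp [h, integrable_indAux])
  have intgp : Integrable gp := integrable_finset_sum _ (fun p _ => by
    by_cases h : p.1 ≠ p.2 <;> simp [h, integrable_indAux])
  have vge : ∫ t, ge t = 2 * lineMetricEdgeSum G f := by
    rw [hge, integral_finset_sum _ (fun p _ => by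
      by_cases h : G.Adj p.1 p.2 <;> simp [h, integrable_indAux])]
    unfold lineMetricEdgeSum
    rw [mul_div_cancel₀ _ (two_ne_zero)]
    refine Finset.sum_congr rfl fun p _ => ?_
    by_cases h : G.Adj p.1 p.2
    · simp only [if_pos h]; exact integral_indAux _ _
    · simp [h]
  have vgp : ∫ t, gp t = 2 * lineMetricPairSum f := by
    rw [hgp, integral_finset_sum _ (fun p _ => by
      by_cases h : p.1 ≠ p.2 <;> simp [h, integrable_indAux])]
    unfold lineMetricPairSum
    rw [mul_div_cancel₀ _ (two_ne_zero)]
    refine Finset.sum_congr rfl fun p _ => ?_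
    by_cases h : p.1 ≠ p.2
    · simp only [if_pos h]; exact integral_indAux _ _
    · simp [h]
  have pointwise : ∀ t : ℝ, r * gp t ≤ ge t := by
    intro t
    have hge_t : ge t = 2 * (cutEdgeCard' G (F t) : ℝ) := by
      have e1 : ge t = ∑ p : V × V,
          if G.Adj p.1 p.2 then |cfAux (F t) p.1 - cfAux (F t) p.2| else 0 :=
        Finset.sum_congr rfl fun p _ => by rw [stepA t p.1 p.2]
      have e2 := edgeSum_cfAux G (F t)
      unfold lineMetricEdgeSum at e2
      rw [e1]; linarith
    have hgp_t : gp t = 2 * (((F t).card : ℝ) * (((F t)ᶜ : Finset V).card : ℝ)) := by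
      have e1 : gp t = ∑ p : V × V,
          if p.1 ≠ p.2 then |cfAux (F t) p.1 - cfAux (F t) p.2| else 0 :=
        Finset.sum_congr rfl fun p _ => by rw [stepA t p.1 p.2]
      have e2 := pairSum_cfAux (A := F t)
      unfold lineMetricPairSum at e2
      rw [e1]; linarith
    rw [hge_t, hgp_t]
    have := hr (F t)
    linarith
  have h1 : r * ∫ t, gp t ≤ ∫ t, ge t := by
    rw [← integral_const_mul]
    exact integral_mono (intgp.const_mul r) intge pointwise
  rw [vge, vgp] at h1
  linarith

end Aux

/-- The minimum over nonzero line metrics `ℓ` of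
`(∑_{{u,v}∈E} ℓ(u,v)) / (∑_{{u,v}∈binom(V,2)} ℓ(u,v))` is attained by a cut metric
(a line metric given by a nonconstant `f : V → {0,1}`), and equals the edge sparsity of `G`. -/
theorem stmt_5 {V : Type*} [Fintype V] [DecidableEq V] (G : SimpleGraph V)
    [DecidableRel G.Adj] (hV : 2 ≤ Fintype.card V) :
    (∃ g : V → Bool, (∃ u v, g u ≠ g v) ∧
      (letI f : V → ℝ := fun v => if g v then 1 else 0;
        lineMetricEdgeSum G f / lineMetricPairSum f)
        = sInf {r : ℝ | ∃ f : V → ℝ, (∃ u v, f u ≠ f v) ∧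
            r = lineMetricEdgeSum G f / lineMetricPairSum f}) ∧
    sInf {r : ℝ | ∃ f : V → ℝ, (∃ u v, f u ≠ f v) ∧
        r = lineMetricEdgeSum G f / lineMetricPairSum f}
      = sInf {r : ℝ | ∃ A : Finset V, A.Nonempty ∧ A ≠ Finset.univ ∧
        r = (cutEdgeCard' G A : ℝ) / ((A.card : ℝ) * ((Aᶜ : Finset V).card : ℝ))} := by
  classical
  set cutRatio : Finset V → ℝ :=
    fun A => (cutEdgeCard' G A : ℝ) / ((A.card : ℝ) * ((Aᶜ : Finset V).card : ℝ)) with hcrdef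
  set Sc : Set ℝ := {r : ℝ | ∃ A : Finset V, A.Nonempty ∧ A ≠ Finset.univ ∧ r = cutRatio A}
    with hScdef
  set Sl : Set ℝ := {r : ℝ | ∃ f : V → ℝ, (∃ u v, f u ≠ f v) ∧
      r = lineMetricEdgeSum G f / lineMetricPairSum f} with hSldef
  -- Sc is finite and nonempty
  have hfin : Sc.Finite := Set.Finite.subset (Set.finite_range cutRatio)
    (by rintro r ⟨A, -, -, rfl⟩; exact ⟨A, rfl⟩)
  obtain ⟨u₀, v₀, huv₀⟩ := Fintype.exists_pair_of_one_lt_card (α := V) (by omega)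
  have hne : Sc.Nonempty := by
    refine ⟨cutRatio {u₀}, {u₀}, ⟨u₀, mem_singleton_self u₀⟩, ?_, rfl⟩
    intro h
    have : v₀ ∈ ({u₀} : Finset V) := h ▸ mem_univ v₀
    exact huv₀ (mem_singleton.1 this).symm
  have hr0mem : sInf Sc ∈ Sc := hne.csInf_mem hfin
  set r0 := sInf Sc with hr0def
  obtain ⟨A₀, hA₀ne, hA₀univ, hA₀eq⟩ := hr0mem
  have hlb : ∀ s ∈ Sc, r0 ≤ s := fun s hs => csInf_le hfin.bddBelow hs
  have hr0nonneg : 0 ≤ r0 := by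
    rw [hA₀eq]
    exact div_nonneg (Nat.cast_nonneg _) (mul_nonneg (Nat.cast_nonneg _) (Nat.cast_nonneg _))
  -- r0 lower-bounds all cut products
  have hrA : ∀ A : Finset V,
      r0 * ((A.card : ℝ) * ((Aᶜ : Finset V).card : ℝ)) ≤ (cutEdgeCard' G A : ℝ) := by
    intro A
    by_cases hA1 : A.Nonempty
    · by_cases hA2 : A = Finset.univ
      · subst hA2; simp
      · have hpos : (0:ℝ) < (A.card : ℝ) * ((Aᶜ : Finset V).card : ℝ) := by
          have h1 : 0 < A.card := Finset.card_pos.2 hA1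
          have h2 : 0 < (Aᶜ : Finset V).card := by
            rw [Finset.card_pos]
            obtain ⟨v, hv⟩ : ∃ v, v ∉ A := by
              by_contra h; push_neg at h
              exact hA2 (Finset.eq_univ_iff_forall.2 h)
            exact ⟨v, Finset.mem_compl.2 hv⟩
          positivity
        have hmem : cutRatio A ∈ Sc := ⟨A, hA1, hA2, rfl⟩
        have := hlb _ hmem
        rw [hcrdef] at this
        calc r0 * ((A.card : ℝ) * ((Aᶜ : Finset V).card : ℝ))
            ≤ ((cutEdgeCard' G A : ℝ) / ((A.card : ℝ) * ((Aᶜ : Finset V).card : ℝ)))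
              * ((A.card : ℝ) * ((Aᶜ : Finset V).card : ℝ)) := by
              exact mul_le_mul_of_nonneg_right this (le_of_lt hpos)
          _ = (cutEdgeCard' G A : ℝ) := div_mul_cancel₀ _ (ne_of_gt hpos)
    · rw [Finset.not_nonempty_iff_eq_empty] at hA1
      subst hA1; simp
  -- every proper cut gives an element of Sl with value cutRatio A
  have hcut_in_line : ∀ A : Finset V, A.Nonempty → A ≠ Finset.univ → cutRatio A ∈ Sl := by
    intro A h1 h2
    obtain ⟨u, hu⟩ := h1
    have : ∃ v, v ∉ A := by
      by_contra h
      push_neg at h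
      exact h2 (Finset.eq_univ_iff_forall.2 h)
    obtain ⟨v, hv⟩ := this
    refine ⟨cfAux A, ⟨u, v, ?_⟩, ?_⟩
    · simp [cfAux, hu, hv]
    · rw [edgeSum_cfAux, pairSum_cfAux, hcrdef]
  -- r0 lower-bounds Sl
  have hlbSl : ∀ s ∈ Sl, r0 ≤ s := by
    rintro s ⟨f, ⟨u, v, huv⟩, rfl⟩
    have huvne : u ≠ v := fun h => huv (h ▸ rfl)
    have hpos : 0 < lineMetricPairSum f := by
      unfold lineMetricPairSum
      have hterm : (0:ℝ) < (if (u, v).1 ≠ (u, v).2 then |f (u,v).1 - f (u,v).2| else 0) := by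
        simp only [ne_eq]
        rw [if_pos huvne]
        exact abs_pos.2 (sub_ne_zero.2 huv)
      have hsum : (if (u, v).1 ≠ (u, v).2 then |f (u,v).1 - f (u,v).2| else 0)
          ≤ ∑ p : V × V, if p.1 ≠ p.2 then |f p.1 - f p.2| else 0 := by
        apply Finset.single_le_sum (f := fun p : V × V =>
          if p.1 ≠ p.2 then |f p.1 - f p.2| else 0)
        · intro p _; positivity
        · exact mem_univ (u, v)
      linarith
    have hkey := key_ineqAux G f r0 hrA
    rw [le_div_iff₀ hpos]
    exact hkey
  have hr0_in_Sl : r0 ∈ Sl := hA₀eq ▸ hcut_in_line A₀ hA₀ne hA₀univ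
  have hSlInf : sInf Sl = r0 :=
    le_antisymm (csInf_le ⟨r0, hlbSl⟩ hr0_in_Sl) (le_csInf ⟨r0, hr0_in_Sl⟩ hlbSl)
  constructor
  · refine ⟨fun v => decide (v ∈ A₀), ?_, ?_⟩
    · obtain ⟨u, hu⟩ := hA₀ne
      have : ∃ v, v ∉ A₀ := by
        by_contra h
        push_neg at h
        exact hA₀univ (Finset.eq_univ_iff_forall.2 h)
      obtain ⟨v, hv⟩ := this
      exact ⟨u, v, by simp [hu, hv]⟩
    · have hfeq : (fun v => if decide (v ∈ A₀) then (1:ℝ) else 0) = cfAux A₀ := by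
        funext v; simp [cfAux]
      show lineMetricEdgeSum G (fun v => if decide (v ∈ A₀) then (1:ℝ) else 0) /
          lineMetricPairSum (fun v => if decide (v ∈ A₀) then (1:ℝ) else 0) = sInf Sl
      rw [hfeq, hSlInf, edgeSum_cfAux, pairSum_cfAux, hA₀eq]
  · exact hSlInf
end

section
/- The m×m grid graph has no separator of size less than m/4: if S ⊆ V is a set of vertices of the m×m grid such that every connected component of the grid minus S has at most (2/3)m² vertices, then |S| ≥ m/4. -/
/-- The `m × m` grid graph: vertices `Fin m × Fin m`, edges between points at
`ℓ¹`-distance 1. -/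
def gridGraph (m : ℕ) : SimpleGraph (Fin m × Fin m) :=
  SimpleGraph.fromRel (fun a b =>
    (a.1 = b.1 ∧ (b.2 : ℕ) = (a.2 : ℕ) + 1) ∨ (a.2 = b.2 ∧ (b.1 : ℕ) = (a.1 : ℕ) + 1))

/-- The `m × m` grid has no separator of size less than `m/4`: if removing `S` leaves
all connected components with at most `(2/3)m²` vertices, then `|S| ≥ m/4`. -/
theorem stmt_10 (m : ℕ) (S : Finset (Fin m × Fin m))
    (hS : ∀ C : ((gridGraph m).induce ((↑S : Set (Fin m × Fin m))ᶜ)).ConnectedComponent,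
      (C.supp.ncard : ℝ) ≤ (2 / 3) * (m ^ 2 : ℝ)) :
    (m : ℝ) / 4 ≤ (S.card : ℝ) := by
  by_contra hlt
  push_neg at hlt
  have hs0 : (0:ℝ) ≤ (S.card : ℝ) := by positivity
  have hmR : (0:ℝ) < (m:ℝ) := by nlinarith
  have hm : 0 < m := by exact_mod_cast hmR
  have hSm : S.card < m := by
    have : (S.card : ℝ) < (m : ℝ) := by nlinarith
    exact_mod_cast this
  set Sc : Set (Fin m × Fin m) := (↑S : Set (Fin m × Fin m))ᶜ with hSc
  set H := (gridGraph m).induce Sc with hH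
  -- adjacency helper
  have hadj : ∀ (a b : Fin m × Fin m) (ha : a ∈ Sc) (hb : b ∈ Sc),
      ((a.1 = b.1 ∧ (b.2 : ℕ) = (a.2 : ℕ) + 1) ∨ (a.2 = b.2 ∧ (b.1 : ℕ) = (a.1 : ℕ) + 1)) →
      H.Adj ⟨a, ha⟩ ⟨b, hb⟩ := by
    intro a b ha hb h
    show (gridGraph m).Adj a b
    rw [gridGraph, SimpleGraph.fromRel_adj]
    refine ⟨?_, Or.inl h⟩
    rcases h with ⟨_, h2⟩ | ⟨_, h2⟩ <;> intro he <;> subst he <;> omega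
  -- row reachability
  have rowReach : ∀ (i : Fin m) (hi : ∀ j, (i, j) ∈ Sc) (j j' : Fin m),
      H.Reachable ⟨(i, j), hi j⟩ ⟨(i, j'), hi j'⟩ := by
    intro i hi
    have aux : ∀ n (hn : n < m),
        H.Reachable ⟨(i, ⟨0, hm⟩), hi _⟩ ⟨(i, ⟨n, hn⟩), hi _⟩ := by
      intro n
      induction n with
      | zero => intro hn; exact SimpleGraph.Reachable.refl _
      | succ k ih =>
        intro hn
        have hk : k < m := by omega
        exact (ih hk).trans
          (SimpleGraph.Adj.reachable (hadj (i, ⟨k, hk⟩) (i, ⟨k+1, hn⟩) (hi _) (hi _)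
            (Or.inl ⟨rfl, rfl⟩)))
    intro j j'
    exact (aux j.1 j.2).symm.trans (aux j'.1 j'.2)
  -- column reachability
  have colReach : ∀ (j : Fin m) (hj : ∀ i, (i, j) ∈ Sc) (i i' : Fin m),
      H.Reachable ⟨(i, j), hj i⟩ ⟨(i', j), hj i'⟩ := by
    intro j hj
    have aux : ∀ n (hn : n < m),
        H.Reachable ⟨(⟨0, hm⟩, j), hj _⟩ ⟨(⟨n, hn⟩, j), hj _⟩ := by
      intro n
      induction n with
      | zero => intro hn; exact SimpleGraph.Reachable.refl _
      | succ k ih =>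
        intro hn
        have hk : k < m := by omega
        exact (ih hk).trans
          (SimpleGraph.Adj.reachable (hadj (⟨k, hk⟩, j) (⟨k+1, hn⟩, j) (hj _) (hj _)
            (Or.inr ⟨rfl, rfl⟩)))
    intro i i'
    exact (aux i.1 i.2).symm.trans (aux i'.1 i'.2)
  -- free rows and columns
  set rows : Finset (Fin m) := Finset.univ \ S.image Prod.fst with hrowsdef
  set cols : Finset (Fin m) := Finset.univ \ S.image Prod.snd with hcolsdef
  have hrowfree : ∀ i ∈ rows, ∀ j, (i, j) ∈ Sc := by
    intro i hi j hmem
    rw [hrowsdef, Finset.mem_sdiff] at hi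
    exact hi.2 (Finset.mem_image.mpr ⟨(i, j), hmem, rfl⟩)
  have hcolfree : ∀ j ∈ cols, ∀ i, (i, j) ∈ Sc := by
    intro j hj i hmem
    rw [hcolsdef, Finset.mem_sdiff] at hj
    exact hj.2 (Finset.mem_image.mpr ⟨(i, j), hmem, rfl⟩)
  have hrowcard : m ≤ rows.card + S.card := by
    have h1 : (S.image Prod.fst).card ≤ S.card := Finset.card_image_le
    have h2 : rows.card = m - (S.image Prod.fst).card := by
      rw [hrowsdef, Finset.card_sdiff_of_subset (Finset.subset_univ _), Finset.card_univ, Fintype.card_fin]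
    have h3 : (S.image Prod.fst).card ≤ m := by
      calc (S.image Prod.fst).card ≤ Fintype.card (Fin m) := Finset.card_le_univ _
        _ = m := Fintype.card_fin m
    omega
  have hcolcard : m ≤ cols.card + S.card := by
    have h1 : (S.image Prod.snd).card ≤ S.card := Finset.card_image_le
    have h2 : cols.card = m - (S.image Prod.snd).card := by
      rw [hcolsdef, Finset.card_sdiff_of_subset (Finset.subset_univ _), Finset.card_univ, Fintype.card_fin]
    have h3 : (S.image Prod.snd).card ≤ m := by
      calc (S.image Prod.snd).card ≤ Fintype.card (Fin m) := Finset.card_le_univ _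
        _ = m := Fintype.card_fin m
    omega
  obtain ⟨i₀, hi₀⟩ : rows.Nonempty := Finset.card_pos.mp (by omega)
  obtain ⟨j₀, hj₀⟩ : cols.Nonempty := Finset.card_pos.mp (by omega)
  set root : Sc := ⟨(i₀, j₀), hrowfree i₀ hi₀ j₀⟩ with hroot
  set C := H.connectedComponentMk root with hC
  have hsupp : ∀ i, ∀ hi : i ∈ rows, ∀ j, (⟨(i, j), hrowfree i hi j⟩ : Sc) ∈ C.supp := by
    intro i hi j
    show H.connectedComponentMk _ = C
    rw [hC]
    apply SimpleGraph.ConnectedComponent.sound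
    have r1 : H.Reachable ⟨(i, j), hrowfree i hi j⟩ ⟨(i, j₀), hrowfree i hi j₀⟩ :=
      rowReach i (hrowfree i hi) j j₀
    have r2 : H.Reachable ⟨(i, j₀), hcolfree j₀ hj₀ i⟩ ⟨(i₀, j₀), hcolfree j₀ hj₀ i₀⟩ :=
      colReach j₀ (hcolfree j₀ hj₀) i i₀
    exact r1.trans r2
  -- cardinality bound
  have hsub : (↑(rows ×ˢ (Finset.univ : Finset (Fin m))) : Set (Fin m × Fin m)) ⊆
      Subtype.val '' C.supp := by
    rintro ⟨i, j⟩ hmem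
    rw [Finset.coe_product] at hmem
    obtain ⟨hi, -⟩ := hmem
    exact ⟨⟨(i, j), hrowfree i hi j⟩, hsupp i hi j, rfl⟩
  have hcard1 : rows.card * m ≤ C.supp.ncard := by
    have := Set.ncard_le_ncard hsub (Set.toFinite _)
    rw [Set.ncard_coe_finset, Set.ncard_image_of_injective _ Subtype.val_injective] at this
    simpa [Finset.card_product] using this
  have hfinal := hS C
  have hcast : ((rows.card * m : ℕ) : ℝ) ≤ ((C.supp.ncard : ℕ) : ℝ) := by exact_mod_cast hcard1
  push_cast at hcast
  have hrc : (m : ℝ) ≤ (rows.card : ℝ) + (S.card : ℝ) := by exact_mod_cast hrowcard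
  nlinarith [mul_le_mul_of_nonneg_right hrc (le_of_lt hmR),
    mul_le_mul_of_nonneg_right (le_of_lt hlt) (le_of_lt hmR)]
end

section
/- Let β > 0 and let G be a graph on n vertices such that every induced subgraph H of G on at least (2/3)n vertices has edge sparsity at most β. Then G has a balanced edge cut (A, V\A) with (1/3)n ≤ |A| ≤ (2/3)n and |E(A, V\A)| ≤ β·n². -/
/-- The number of edges of `G` with one endpoint in `A` and the other in `B`
(for disjoint `A`, `B`, each such edge is counted once). -/
def edgesBetween {V : Type*} [Fintype V] [DecidableEq V]
    (G : SimpleGraph V) [DecidableRel G.Adj] (A B : Finset V) : ℕ :=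
  (Finset.univ.filter fun p : V × V => p.1 ∈ A ∧ p.2 ∈ B ∧ G.Adj p.1 p.2).card

lemma edgesBetween_comm {V : Type*} [Fintype V] [DecidableEq V]
    (G : SimpleGraph V) [DecidableRel G.Adj] (A B : Finset V) :
    edgesBetween G A B = edgesBetween G B A := by
  unfold edgesBetween
  refine Finset.card_bij' (fun p _ => p.swap) (fun p _ => p.swap) ?_ ?_ ?_ ?_
  all_goals intro p hp
  all_goals first
    | rfl
    | (simp only [Finset.mem_filter, Finset.mem_univ, true_and] at hp ⊢
       exact ⟨hp.2.1, hp.1, hp.2.2.symm⟩)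

lemma edgesBetween_mono_right {V : Type*} [Fintype V] [DecidableEq V]
    (G : SimpleGraph V) [DecidableRel G.Adj] (A : Finset V) {B C : Finset V}
    (h : B ⊆ C) : edgesBetween G A B ≤ edgesBetween G A C := by
  apply Finset.card_le_card
  intro p hp
  simp only [Finset.mem_filter, Finset.mem_univ, true_and] at hp ⊢
  exact ⟨hp.1, h hp.2.1, hp.2.2⟩

lemma edgesBetween_union_left {V : Type*} [Fintype V] [DecidableEq V]
    (G : SimpleGraph V) [DecidableRel G.Adj] (A B C : Finset V) :
    edgesBetween G (A ∪ B) C ≤ edgesBetween G A C + edgesBetween G B C := by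
  refine le_trans (Finset.card_le_card ?_) (Finset.card_union_le _ _)
  intro p hp
  simp only [Finset.mem_filter, Finset.mem_univ, true_and, Finset.mem_union] at hp ⊢
  rcases hp with ⟨h1 | h1, h2⟩
  · exact Or.inl ⟨h1, h2⟩
  · exact Or.inr ⟨h1, h2⟩

lemma edgesBetween_empty_left {V : Type*} [Fintype V] [DecidableEq V]
    (G : SimpleGraph V) [DecidableRel G.Adj] (B : Finset V) :
    edgesBetween G ∅ B = 0 := by
  simp [edgesBetween]

lemma stmt_12_aux {V : Type*} [Fintype V] [DecidableEq V] (G : SimpleGraph V)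
    [DecidableRel G.Adj] (n : ℕ) (hn : Fintype.card V = n) (β : ℝ) (hβ : 0 < β)
    (hsparse : ∀ W : Finset V, (2 / 3) * (n : ℝ) ≤ (W.card : ℝ) →
      ∃ A : Finset V, A.Nonempty ∧ A ⊂ W ∧
        (edgesBetween G A (W \ A) : ℝ) ≤ β * (A.card : ℝ) * (((W \ A) : Finset V).card : ℝ)) :
    ∀ k : ℕ, ∀ B : Finset V, Bᶜ.card ≤ k → (B.card : ℝ) < (n : ℝ) / 3 →
      (edgesBetween G B Bᶜ : ℝ) ≤ β * (B.card : ℝ) * (n : ℝ) →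
    ∃ A : Finset V, (n : ℝ) / 3 ≤ (A.card : ℝ) ∧ (A.card : ℝ) ≤ (2 / 3) * (n : ℝ) ∧
      (edgesBetween G A Aᶜ : ℝ) ≤ β * (n : ℝ) ^ 2 := by
  intro k
  induction k with
  | zero =>
    intro B hk hB hE
    exfalso
    have h1 : B.card + Bᶜ.card = n := by rw [Finset.card_add_card_compl, hn]
    have : B.card = n := by omega
    rw [this] at hB
    have : (0:ℝ) ≤ (n:ℝ) := Nat.cast_nonneg n
    linarith
  | succ k ih =>
    intro B hk hB hE
    have hcardsum : B.card + Bᶜ.card = n := by rw [Finset.card_add_card_compl, hn]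
    have hWcast : (Bᶜ.card : ℝ) = (n : ℝ) - (B.card : ℝ) := by
      have h := hcardsum
      have : ((B.card : ℝ)) + ((Bᶜ.card : ℝ)) = (n : ℝ) := by exact_mod_cast h
      linarith
    have hW : (2 / 3) * (n : ℝ) ≤ (Bᶜ.card : ℝ) := by
      rw [hWcast]; linarith
    obtain ⟨A₀, hA₀ne, hA₀ss, hcut₀⟩ := hsparse Bᶜ hW
    -- choose the smaller side
    obtain ⟨A, hAsub, hAne, hA2, hcut⟩ :
        ∃ A : Finset V, A ⊆ Bᶜ ∧ A.Nonempty ∧ 2 * A.card ≤ Bᶜ.card ∧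
          (edgesBetween G A (Bᶜ \ A) : ℝ) ≤ β * (A.card : ℝ) * ((Bᶜ \ A).card : ℝ) := by
      by_cases hsmall : 2 * A₀.card ≤ Bᶜ.card
      · exact ⟨A₀, hA₀ss.subset, hA₀ne, hsmall, hcut₀⟩
      · refine ⟨Bᶜ \ A₀, Finset.sdiff_subset, ?_, ?_, ?_⟩
        · rw [Finset.sdiff_nonempty]
          exact hA₀ss.not_subset
        · have hsd : (Bᶜ \ A₀).card = Bᶜ.card - A₀.card :=
            Finset.card_sdiff_of_subset hA₀ss.subset
          have hle : A₀.card ≤ Bᶜ.card := Finset.card_le_card hA₀ss.subset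
          omega
        · have hsub : A₀ ⊆ Bᶜ := hA₀ss.subset
          have heq : Bᶜ \ (Bᶜ \ A₀) = A₀ := by
            ext x
            simp only [Finset.mem_sdiff]
            constructor
            · rintro ⟨h1, h2⟩
              by_contra hx
              exact h2 ⟨h1, hx⟩
            · intro hx
              exact ⟨hsub hx, fun h => h.2 hx⟩
          rw [heq, edgesBetween_comm]
          calc (edgesBetween G A₀ (Bᶜ \ A₀) : ℝ)
              ≤ β * (A₀.card : ℝ) * ((Bᶜ \ A₀).card : ℝ) := hcut₀
            _ = β * ((Bᶜ \ A₀).card : ℝ) * (A₀.card : ℝ) := by ring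
    have hdisj : Disjoint B A := Finset.disjoint_left.mpr fun x hxB hxA =>
      (Finset.mem_compl.mp (hAsub hxA)) hxB
    have hBAcard : (B ∪ A).card = B.card + A.card := Finset.card_union_of_disjoint hdisj
    have h5 : ((B ∪ A).card : ℝ) = (B.card : ℝ) + (A.card : ℝ) := by
      rw [hBAcard]; push_cast; ring
    have hBAcompl : (B ∪ A)ᶜ = Bᶜ \ A := by
      rw [Finset.compl_union, Finset.sdiff_eq_inter_compl]
    have hsdcard : (Bᶜ \ A).card = Bᶜ.card - A.card := Finset.card_sdiff_of_subset hAsub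
    have hAle : A.card ≤ Bᶜ.card := Finset.card_le_card hAsub
    have hsdleN : ((Bᶜ \ A).card : ℝ) ≤ (n : ℝ) := by
      have h : (Bᶜ \ A).card ≤ n := hn ▸ Finset.card_le_univ (Bᶜ \ A)
      exact_mod_cast h
    have h2a : (2 : ℝ) * (A.card : ℝ) ≤ (Bᶜ.card : ℝ) := by exact_mod_cast hA2
    -- new cut bound
    have hEB' : (edgesBetween G (B ∪ A) (B ∪ A)ᶜ : ℝ)
        ≤ β * ((B ∪ A).card : ℝ) * (n : ℝ) := by
      rw [hBAcompl]
      have h1 : (edgesBetween G (B ∪ A) (Bᶜ \ A) : ℝ)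
          ≤ (edgesBetween G B (Bᶜ \ A) : ℝ) + (edgesBetween G A (Bᶜ \ A) : ℝ) := by
        exact_mod_cast edgesBetween_union_left G B A (Bᶜ \ A)
      have h2 : (edgesBetween G B (Bᶜ \ A) : ℝ) ≤ (edgesBetween G B Bᶜ : ℝ) := by
        exact_mod_cast edgesBetween_mono_right G B Finset.sdiff_subset
      have h4 : β * (A.card : ℝ) * ((Bᶜ \ A).card : ℝ) ≤ β * (A.card : ℝ) * (n : ℝ) := by
        apply mul_le_mul_of_nonneg_left hsdleN
        positivity
      have hexp : β * ((B ∪ A).card : ℝ) * (n : ℝ)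
          = β * (B.card : ℝ) * (n : ℝ) + β * (A.card : ℝ) * (n : ℝ) := by
        rw [h5]; ring
      rw [hexp]
      linarith
    by_cases hstop : (n : ℝ) / 3 ≤ ((B ∪ A).card : ℝ)
    · refine ⟨B ∪ A, hstop, ?_, ?_⟩
      · rw [h5]; linarith
      · have hn0 : (0:ℝ) ≤ (n:ℝ) := Nat.cast_nonneg n
        have hb23 : ((B ∪ A).card : ℝ) ≤ (2/3) * (n:ℝ) := by rw [h5]; linarith
        have hcn : ((B ∪ A).card : ℝ) ≤ (n:ℝ) := by linarith
        calc (edgesBetween G (B ∪ A) (B ∪ A)ᶜ : ℝ)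
            ≤ β * ((B ∪ A).card : ℝ) * (n : ℝ) := hEB'
          _ ≤ β * (n : ℝ) * (n : ℝ) := by
              apply mul_le_mul_of_nonneg_right _ hn0
              exact mul_le_mul_of_nonneg_left hcn hβ.le
          _ = β * (n : ℝ) ^ 2 := by ring
    · push_neg at hstop
      apply ih (B ∪ A) ?_ hstop hEB'
      have hApos : 1 ≤ A.card := Finset.card_pos.mpr hAne
      have : (B ∪ A)ᶜ.card = Bᶜ.card - A.card := by rw [hBAcompl, hsdcard]
      omega

/-- If every induced subgraph of `G` on at least `(2/3)n` vertices has edge sparsity at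
most `β`, then `G` has a balanced edge cut `(A, V∖A)` with `(1/3)n ≤ |A| ≤ (2/3)n` and
`|E(A, V∖A)| ≤ β·n²`. -/
theorem stmt_12 {V : Type*} [Fintype V] [DecidableEq V] (G : SimpleGraph V)
    [DecidableRel G.Adj] (n : ℕ) (hn : Fintype.card V = n) (β : ℝ) (hβ : 0 < β)
    (hsparse : ∀ W : Finset V, (2 / 3) * (n : ℝ) ≤ (W.card : ℝ) →
      ∃ A : Finset V, A.Nonempty ∧ A ⊂ W ∧
        (edgesBetween G A (W \ A) : ℝ) ≤ β * (A.card : ℝ) * (((W \ A) : Finset V).card : ℝ)) :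
    ∃ A : Finset V, (n : ℝ) / 3 ≤ (A.card : ℝ) ∧ (A.card : ℝ) ≤ (2 / 3) * (n : ℝ) ∧
      (edgesBetween G A Aᶜ : ℝ) ≤ β * (n : ℝ) ^ 2 := by
  rcases Nat.eq_zero_or_pos n with h0 | hpos
  · refine ⟨∅, ?_, ?_, ?_⟩
    · simp [h0]
    · simp [h0]
    · rw [edgesBetween_empty_left]
      push_cast
      positivity
  · apply stmt_12_aux G n hn β hβ hsparse n ∅ ?_ ?_ ?_
    · simp [hn]
    · have : (0:ℝ) < (n:ℝ) := by exact_mod_cast hpos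
      simp only [Finset.card_empty, Nat.cast_zero]
      linarith
    · rw [edgesBetween_empty_left]
      simp
end

section
/- Let α > 0 and let G be a graph on n vertices such that every induced subgraph H of G on at least (2/3)n vertices has vertex sparsity at most α. Then G has a separator of size at most α·n². -/
/-- If every induced subgraph of `G` on at least `(2/3)n` vertices has vertex sparsity at
most `α` (i.e., admits a vertex cut `(A,B,S)` with `|S| ≤ α·|A∪S|·|B∪S|`), then `G` has a
separator of size at most `α·n²`. -/
theorem stmt_13 {V : Type*} [Fintype V] [DecidableEq V] (G : SimpleGraph V)
    (n : ℕ) (hn : Fintype.card V = n) (α : ℝ) (hα : 0 < α)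
    (hsparse : ∀ W : Finset V, (2 / 3) * (n : ℝ) ≤ (W.card : ℝ) →
      ∃ A B S : Finset V, A.Nonempty ∧ B.Nonempty ∧
        Disjoint A B ∧ Disjoint A S ∧ Disjoint B S ∧ A ∪ B ∪ S = W ∧
        (∀ a ∈ A, ∀ b ∈ B, ¬ G.Adj a b) ∧
        (S.card : ℝ) ≤ α * ((A ∪ S).card : ℝ) * ((B ∪ S).card : ℝ)) :
    ∃ S A B : Finset V, Disjoint A B ∧ Disjoint A S ∧ Disjoint B S ∧
      A ∪ B ∪ S = Finset.univ ∧ (∀ a ∈ A, ∀ b ∈ B, ¬ G.Adj a b) ∧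
      (A.card : ℝ) ≤ (2 / 3) * (n : ℝ) ∧ (B.card : ℝ) ≤ (2 / 3) * (n : ℝ) ∧
      (S.card : ℝ) ≤ α * (n : ℝ) ^ 2 := by
  suffices h : ∀ a : ℕ, ∀ A B S : Finset V, A.card = a →
      Disjoint A B → Disjoint A S → Disjoint B S →
      A ∪ B ∪ S = Finset.univ →
      (∀ x ∈ A, ∀ y ∈ B, ¬ G.Adj x y) →
      (B.card : ℝ) ≤ (2 / 3) * (n : ℝ) →
      (S.card : ℝ) ≤ α * n * (n - A.card) →
      ∃ S' A' B' : Finset V, Disjoint A' B' ∧ Disjoint A' S' ∧ Disjoint B' S' ∧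
        A' ∪ B' ∪ S' = Finset.univ ∧ (∀ a ∈ A', ∀ b ∈ B', ¬ G.Adj a b) ∧
        (A'.card : ℝ) ≤ (2 / 3) * (n : ℝ) ∧ (B'.card : ℝ) ≤ (2 / 3) * (n : ℝ) ∧
        (S'.card : ℝ) ≤ α * (n : ℝ) ^ 2 by
    have h0 : (0:ℝ) ≤ (n:ℝ) := Nat.cast_nonneg n
    refine h (Finset.univ.card) Finset.univ ∅ ∅ rfl (Finset.disjoint_empty_right _)
      (Finset.disjoint_empty_right _) (Finset.disjoint_empty_right _) (by simp)
      (by simp) (by simp) ?_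
    simp [hn]
  intro a
  induction a using Nat.strong_induction_on with
  | _ a ih =>
    intro A B S hA hAB hAS hBS hU hE hBsmall hSinv
    have hAsub : A ⊆ Finset.univ := Finset.subset_univ A
    have hAn : A.card ≤ n := by rw [← hn]; exact Finset.card_le_univ A
    by_cases hle : (A.card : ℝ) ≤ (2/3) * (n : ℝ)
    · refine ⟨S, A, B, hAB, hAS, hBS, hU, hE, hle, hBsmall, ?_⟩
      have : (A.card : ℝ) ≥ 0 := Nat.cast_nonneg _
      have hn' : (A.card : ℝ) ≤ (n : ℝ) := by exact_mod_cast hAn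
      have hpos : (0:ℝ) ≤ α * n * A.card :=
        mul_nonneg (mul_nonneg hα.le (Nat.cast_nonneg n)) this
      nlinarith [hSinv]
    · push_neg at hle
      obtain ⟨A1, B1, S1, hA1ne, hB1ne, h12, h1s, h2s, hW, hE1, hS1⟩ :=
        hsparse A (le_of_lt hle)
      -- generic step, to be applied with (A1,B1) ordered so that B1 is the smaller part
      have step : ∀ A1 B1 S1 : Finset V, A1.Nonempty → B1.Nonempty →
          Disjoint A1 B1 → Disjoint A1 S1 → Disjoint B1 S1 → A1 ∪ B1 ∪ S1 = A →
          (∀ x ∈ A1, ∀ y ∈ B1, ¬ G.Adj x y) →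
          (S1.card : ℝ) ≤ α * ((A1 ∪ S1).card : ℝ) * ((B1 ∪ S1).card : ℝ) →
          B1.card ≤ A1.card →
          ∃ S' A' B' : Finset V, Disjoint A' B' ∧ Disjoint A' S' ∧ Disjoint B' S' ∧
            A' ∪ B' ∪ S' = Finset.univ ∧ (∀ a ∈ A', ∀ b ∈ B', ¬ G.Adj a b) ∧
            (A'.card : ℝ) ≤ (2 / 3) * (n : ℝ) ∧ (B'.card : ℝ) ≤ (2 / 3) * (n : ℝ) ∧
            (S'.card : ℝ) ≤ α * (n : ℝ) ^ 2 := by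
        clear hA1ne hB1ne h12 h1s h2s hW hE1 hS1
        intro A1 B1 S1 hA1ne hB1ne h12 h1s h2s hW hE1 hS1 hord
        have hA1A : A1 ⊆ A := by rw [← hW]; intro x hx; simp [hx]
        have hB1A : B1 ⊆ A := by rw [← hW]; intro x hx; simp [hx]
        have hS1A : S1 ⊆ A := by rw [← hW]; intro x hx; simp [hx]
        have hsum : A1.card + B1.card + S1.card = A.card := by
          rw [← hW, Finset.card_union_of_disjoint, Finset.card_union_of_disjoint h12]
          exact Finset.disjoint_union_left.mpr ⟨h1s, h2s⟩
        have hB1pos : 0 < B1.card := Finset.card_pos.mpr hB1ne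
        have hlt : A1.card < a := by rw [← hA]; omega
        refine ih A1.card hlt A1 (B ∪ B1) (S ∪ S1) rfl ?_ ?_ ?_ ?_ ?_ ?_ ?_
        · exact Finset.disjoint_union_right.mpr
            ⟨Finset.disjoint_of_subset_left hA1A hAB, h12⟩
        · exact Finset.disjoint_union_right.mpr
            ⟨Finset.disjoint_of_subset_left hA1A hAS, h1s⟩
        · refine Finset.disjoint_union_left.mpr ⟨?_, ?_⟩
          · exact Finset.disjoint_union_right.mpr
              ⟨hBS, (Finset.disjoint_of_subset_right hS1A hAB.symm)⟩
          · exact Finset.disjoint_union_right.mpr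
              ⟨Finset.disjoint_of_subset_left hB1A hAS, h2s⟩
        · rw [← hU, ← hW]; ext x; simp; tauto
        · intro x hx y hy
          rcases Finset.mem_union.mp hy with hy | hy
          · exact hE x (hA1A hx) y hy
          · exact hE1 x hx y hy
        · -- B ∪ B1 is small
          have hBn : B.card + A.card ≤ n := by
            rw [← hn]
            calc B.card + A.card = (B ∪ A).card := (Finset.card_union_of_disjoint hAB.symm).symm
              _ ≤ Fintype.card V := Finset.card_le_univ _
          have hc : (B ∪ B1).card ≤ B.card + B1.card := Finset.card_union_le _ _
          have h1 : ((B ∪ B1).card : ℝ) ≤ (B.card : ℝ) + B1.card := by exact_mod_cast hc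
          have h2 : (B.card : ℝ) + A.card ≤ (n : ℝ) := by exact_mod_cast hBn
          have h3 : (B1.card : ℝ) ≤ A1.card := by exact_mod_cast hord
          have h4 : (A1.card : ℝ) + B1.card + S1.card = A.card := by exact_mod_cast hsum
          have h5 : (0:ℝ) ≤ (S1.card : ℝ) := Nat.cast_nonneg _
          linarith
        · -- invariant on S ∪ S1
          have hc : (S ∪ S1).card ≤ S.card + S1.card := Finset.card_union_le _ _
          have h1 : ((S ∪ S1).card : ℝ) ≤ (S.card : ℝ) + S1.card := by exact_mod_cast hc
          have hAS1 : (A1 ∪ S1).card ≤ n := by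
            calc (A1 ∪ S1).card ≤ A.card :=
                Finset.card_le_card (Finset.union_subset hA1A hS1A)
              _ ≤ n := hAn
          have h2 : ((A1 ∪ S1).card : ℝ) ≤ (n : ℝ) := by exact_mod_cast hAS1
          have h3 : ((B1 ∪ S1).card : ℝ) = (B1.card : ℝ) + S1.card := by
            rw [Finset.card_union_of_disjoint h2s]; push_cast; ring
          have h4 : (A1.card : ℝ) + B1.card + S1.card = A.card := by exact_mod_cast hsum
          have h5 : (0:ℝ) ≤ ((B1 ∪ S1).card : ℝ) := Nat.cast_nonneg _
          have h6 : α * ((A1 ∪ S1).card : ℝ) * ((B1 ∪ S1).card : ℝ)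
              ≤ α * n * ((B1.card : ℝ) + S1.card) := by
            rw [← h3]
            have := mul_le_mul_of_nonneg_right
              (mul_le_mul_of_nonneg_left h2 (le_of_lt hα)) h5
            linarith
          have h7 : (S.card : ℝ) ≤ α * n * (n - A.card) := hSinv
          have h8 : α * n * ((n:ℝ) - A.card) + α * n * ((B1.card:ℝ) + S1.card)
              = α * n * ((n:ℝ) - A1.card) := by rw [← h4]; ring
          linarith [hS1, h6, h7, h1, h8]
      rcases le_total B1.card A1.card with hord | hord
      · exact step A1 B1 S1 hA1ne hB1ne h12 h1s h2s hW hE1 hS1 hord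
      · refine step B1 A1 S1 hB1ne hA1ne h12.symm h2s h1s ?_ ?_ ?_ hord
        · rw [← hW]; ext x; simp; tauto
        · intro x hx y hy hadj; exact hE1 y hy x hx hadj.symm
        · calc (S1.card : ℝ) ≤ α * ((A1 ∪ S1).card : ℝ) * ((B1 ∪ S1).card : ℝ) := hS1
            _ = α * ((B1 ∪ S1).card : ℝ) * ((A1 ∪ S1).card : ℝ) := by ring
end

section
/- Let G be an n-vertex graph with maximum degree at most Δ such that espars(G) ≥ β/n for constants Δ and β > 0. Then for n sufficiently large (in terms of Δ, β), at least half of the vertex pairs {u,v} have graph distance d(u,v) ≥ c·log n for a constant c = c(Δ) > 0; consequently econg(G) = Ω(log n / espars(G)). -/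
open Finset

/-- `φ` is a multicommodity flow sending at least one unit of flow between every pair of
distinct vertices (pairs represented by ordered pairs `u < v`). -/
def IsUnitFlow16 {V : Type} [Fintype V] [DecidableEq V] [LinearOrder V]
    (G : SimpleGraph V) [DecidableRel G.Adj]
    (φ : ∀ u v : V, G.Path u v → ℝ) : Prop :=
  (∀ u v (P : G.Path u v), 0 ≤ φ u v P) ∧
  (∀ u v : V, u < v → 1 ≤ ∑ P : G.Path u v, φ u v P)

/-- The congestion of an edge `e` under `φ`. -/
noncomputable def edgeLoad16 {V : Type} [Fintype V] [DecidableEq V] [LinearOrder V]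
    (G : SimpleGraph V) [DecidableRel G.Adj]
    (φ : ∀ u v : V, G.Path u v → ℝ) (e : Sym2 V) : ℝ :=
  ∑ p ∈ Finset.univ.filter (fun p : V × V => p.1 < p.2),
    ∑ P : G.Path p.1 p.2,
      (if e ∈ (P : G.Walk p.1 p.2).edges then φ p.1 p.2 P else 0)

/-- The edge congestion of `G`: infimum over unit flows of the maximum edge load. -/
noncomputable def edgeCongG16 {V : Type} [Fintype V] [DecidableEq V] [LinearOrder V]
    (G : SimpleGraph V) [DecidableRel G.Adj] : ℝ :=
  sInf {r : ℝ | ∃ φ : ∀ u v : V, G.Path u v → ℝ, IsUnitFlow16 G φ ∧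
    r = sSup {x : ℝ | ∃ e ∈ G.edgeSet, x = edgeLoad16 G φ e}}

/-- The number of edges of `G` between `A` and its complement. -/
def cutEdges16 {V : Type} [Fintype V] [DecidableEq V]
    (G : SimpleGraph V) [DecidableRel G.Adj] (A : Finset V) : ℕ :=
  (Finset.univ.filter fun p : V × V => p.1 ∈ A ∧ p.2 ∉ A ∧ G.Adj p.1 p.2).card

/-- The edge sparsity of `G`. -/
noncomputable def edgeSparsity16 {V : Type} [Fintype V] [DecidableEq V]
    (G : SimpleGraph V) [DecidableRel G.Adj] : ℝ :=
  sInf {r : ℝ | ∃ A : Finset V, A.Nonempty ∧ A ≠ Finset.univ ∧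
    r = (cutEdges16 G A : ℝ) / ((A.card : ℝ) * ((Aᶜ : Finset V).card : ℝ))}

private lemma exists_adj_dist16 {V : Type} {G : SimpleGraph V} {u v : V} {k : ℕ}
    (hr : G.Reachable u v) (h : G.dist u v = k + 1) :
    ∃ w, G.Adj w v ∧ G.dist u w ≤ k := by
  obtain ⟨p, hp⟩ := hr.exists_walk_length_eq_dist
  rw [h] at hp
  have hp' : p.reverse.length = k + 1 := by
    rw [SimpleGraph.Walk.length_reverse]; exact hp
  generalize p.reverse = q at hp'
  cases q with
  | nil => simp at hp'
  | cons hadj r =>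
    refine ⟨_, hadj.symm, ?_⟩
    have h2 : r.length = k := by simpa using hp'
    have := SimpleGraph.dist_le r.reverse
    rwa [SimpleGraph.Walk.length_reverse, h2] at this

private lemma ball_card_le16 {V : Type} [Fintype V] [DecidableEq V]
    (G : SimpleGraph V) [DecidableRel G.Adj] {Δ : ℕ} (hdeg : ∀ v, G.degree v ≤ Δ)
    (u : V) (hr : ∀ v, G.Reachable u v) (k : ℕ) :
    (univ.filter fun v => G.dist u v ≤ k).card ≤ (Δ + 1) ^ k := by
  induction k with
  | zero =>
    have hsub : (univ.filter fun v => G.dist u v ≤ 0) ⊆ {u} := by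
      intro v hv
      simp only [mem_filter, mem_univ, true_and, Nat.le_zero] at hv
      simp [((hr v).dist_eq_zero_iff.mp hv).symm]
    simpa using Finset.card_le_card hsub
  | succ k ih =>
    have hsub : (univ.filter fun v => G.dist u v ≤ k + 1) ⊆
        (univ.filter fun v => G.dist u v ≤ k).biUnion
          (fun w => insert w (G.neighborFinset w)) := by
      intro v hv
      simp only [mem_filter, mem_univ, true_and] at hv
      rw [Finset.mem_biUnion]
      rcases le_or_gt (G.dist u v) k with h | h
      · exact ⟨v, by simp [h], by simp⟩
      · obtain ⟨w, hadj, hw⟩ := exists_adj_dist16 (hr v) (le_antisymm hv h)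
        exact ⟨w, by simp [hw], by simp [SimpleGraph.mem_neighborFinset, hadj]⟩
    calc (univ.filter fun v => G.dist u v ≤ k + 1).card
        ≤ _ := Finset.card_le_card hsub
      _ ≤ ∑ w ∈ (univ.filter fun v => G.dist u v ≤ k),
            (insert w (G.neighborFinset w)).card := Finset.card_biUnion_le
      _ ≤ ∑ _w ∈ (univ.filter fun v => G.dist u v ≤ k), (Δ + 1) := by
          refine Finset.sum_le_sum fun w _ => ?_
          refine le_trans (Finset.card_insert_le _ _) ?_
          have := hdeg w
          simp only [SimpleGraph.card_neighborFinset_eq_degree]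
          omega
      _ = (univ.filter fun v => G.dist u v ≤ k).card * (Δ + 1) := by
          rw [Finset.sum_const, smul_eq_mul]
      _ ≤ (Δ + 1) ^ k * (Δ + 1) := Nat.mul_le_mul_right _ ih
      _ = (Δ + 1) ^ (k + 1) := (pow_succ _ _).symm

private lemma card_filter_prod16 {V : Type} [Fintype V] (Q : V × V → Prop) [DecidablePred Q] :
    (univ.filter Q).card = ∑ u : V, (univ.filter fun v => Q (u, v)).card := by
  simp only [Finset.card_filter]
  rw [← Finset.univ_product_univ, Finset.sum_product]

/-- For bounded-degree expanders (`espars(G) ≥ β/n`, maximum degree ≤ `Δ`), for `n` large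
enough at least half of the vertex pairs are at graph distance `≥ c·log n`, and consequently
`econg(G) = Ω(log n / espars(G))`. -/
theorem stmt_16 (Δ : ℕ) (β : ℝ) (hβ : 0 < β) :
    ∃ c > (0 : ℝ), ∃ c' > (0 : ℝ), ∃ N : ℕ,
      ∀ (V : Type) [Fintype V] [DecidableEq V] [LinearOrder V]
        (G : SimpleGraph V) [DecidableRel G.Adj],
        (∀ v : V, G.degree v ≤ Δ) →
        (∀ A : Finset V, A.Nonempty → A ≠ Finset.univ →
          β / (Fintype.card V : ℝ) ≤
            (cutEdges16 G A : ℝ) / ((A.card : ℝ) * ((Aᶜ : Finset V).card : ℝ))) →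
        N ≤ Fintype.card V →
        ((Fintype.card V : ℝ) * ((Fintype.card V : ℝ) - 1) / 2 ≤
          ((Finset.univ.filter (fun p : V × V => p.1 ≠ p.2 ∧
            c * Real.log (Fintype.card V) ≤ (G.dist p.1 p.2 : ℝ))).card : ℝ)) ∧
        c' * Real.log (Fintype.card V) / edgeSparsity16 G ≤ edgeCongG16 G := by
  have hΔ1 : (1:ℝ) < (Δ:ℝ) + 2 := by
    have : (0:ℝ) ≤ (Δ:ℝ) := Nat.cast_nonneg _
    linarith
  set L := Real.log ((Δ:ℝ) + 2) with hLdef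
  have hL : 0 < L := Real.log_pos hΔ1
  refine ⟨1/(2*L), by positivity, 1/(2*L)*β/(8*((Δ:ℝ)+1)), by positivity, 4, ?_⟩
  intro V _inst1 _inst2 _inst3 G _inst4 hdeg hcut hN
  set nR : ℝ := (Fintype.card V : ℝ) with hnRdef
  have hn4 : (4:ℝ) ≤ nR := by rw [hnRdef]; exact_mod_cast hN
  have hnR : (0:ℝ) < nR := by linarith
  have hnV : Nonempty V := Fintype.card_pos_iff.mp (by omega)
  have hlogn : 0 < Real.log nR := Real.log_pos (by linarith)
  -- preconnectedness
  have hpre : G.Preconnected := by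
    intro u v
    by_contra hnr
    set A : Finset V := univ.filter (fun w => G.Reachable u w) with hA
    have hAne : A.Nonempty := ⟨u, by simp only [hA, mem_filter, mem_univ, true_and]; exact SimpleGraph.Reachable.refl u⟩
    have hAuniv : A ≠ univ := by
      intro h
      exact hnr (by simpa [hA] using (h ▸ Finset.mem_univ v : v ∈ A))
    have h0 : cutEdges16 G A = 0 := by
      rw [cutEdges16, Finset.card_eq_zero, Finset.filter_eq_empty_iff]
      rintro ⟨a, b⟩ - ⟨ha, hb, hab⟩
      simp only [hA, mem_filter, mem_univ, true_and] at ha hb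
      exact hb (ha.trans hab.reachable)
    have hc := hcut A hAne hAuniv
    rw [h0] at hc
    simp only [Nat.cast_zero, zero_div] at hc
    have : 0 < β / nR := by positivity
    linarith
  -- notation
  set T : ℝ := 1/(2*L) * Real.log nR with hTdef
  have hT0 : 0 < T := by positivity
  set k : ℕ := ⌊T⌋₊ with hkdef
  -- ball bound in ℝ
  have hballR : ∀ u : V, ((univ.filter fun v => G.dist u v ≤ k).card : ℝ) ≤ nR / 2 := by
    intro u
    have h1 : ((univ.filter fun v => G.dist u v ≤ k).card : ℝ) ≤ (((Δ+1)^k : ℕ) : ℝ) := by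
      exact_mod_cast ball_card_le16 G hdeg u (fun v => hpre u v) k
    have h2 : (((Δ+1)^k : ℕ) : ℝ) ≤ ((Δ:ℝ)+2) ^ (k:ℝ) := by
      push_cast
      calc ((Δ:ℝ)+1)^k ≤ ((Δ:ℝ)+2)^k := by
            refine pow_le_pow_left₀ (by positivity) (by linarith) k
        _ = ((Δ:ℝ)+2) ^ (k:ℝ) := (Real.rpow_natCast _ k).symm
    have h3 : ((Δ:ℝ)+2) ^ (k:ℝ) ≤ ((Δ:ℝ)+2) ^ (T:ℝ) :=
      Real.rpow_le_rpow_of_exponent_le hΔ1.le (Nat.floor_le hT0.le)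
    have h4 : ((Δ:ℝ)+2) ^ (T:ℝ) = Real.sqrt nR := by
      rw [Real.rpow_def_of_pos (by linarith), Real.sqrt_eq_rpow,
        Real.rpow_def_of_pos hnR]
      congr 1
      rw [hTdef, ← hLdef]
      field_simp
    have h5 : Real.sqrt nR ≤ nR / 2 := by
      rw [show nR/2 = Real.sqrt ((nR/2)^2) from (Real.sqrt_sq (by linarith)).symm]
      exact Real.sqrt_le_sqrt (by nlinarith)
    linarith
  -- far vertices are many
  have hfar : ∀ u : V, nR / 2 ≤
      ((univ.filter fun v => u ≠ v ∧ T ≤ (G.dist u v : ℝ)).card : ℝ) := by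
    intro u
    have hsub : (univ.filter fun v => G.dist u v ≤ k)ᶜ ⊆
        (univ.filter fun v => u ≠ v ∧ T ≤ (G.dist u v : ℝ)) := by
      intro v hv
      simp only [Finset.mem_compl, mem_filter, mem_univ, true_and, not_le] at hv ⊢
      have hTd : T ≤ (G.dist u v : ℝ) := by
        have h1 : T < (k:ℝ) + 1 := Nat.lt_floor_add_one T
        have h2 : ((k:ℝ) + 1) ≤ (G.dist u v : ℝ) := by exact_mod_cast hv
        linarith
      refine ⟨?_, hTd⟩
      rintro rfl
      simp [SimpleGraph.dist_self] at hv
    have hcc := Finset.card_le_card hsub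
    rw [Finset.card_compl] at hcc
    have hsubn : (univ.filter fun v => G.dist u v ≤ k).card ≤ Fintype.card V :=
      le_trans (Finset.card_le_card (Finset.subset_univ _)) (by simp)
    have hccR : nR - ((univ.filter fun v => G.dist u v ≤ k).card : ℝ) ≤
        ((univ.filter fun v => u ≠ v ∧ T ≤ (G.dist u v : ℝ)).card : ℝ) := by
      rw [hnRdef]
      push_cast [Nat.cast_sub hsubn] at hcc ⊢
      exact_mod_cast hcc
    have := hballR u
    linarith
  -- Part 1
  have part1 : nR * (nR - 1) / 2 ≤
      ((Finset.univ.filter (fun p : V × V => p.1 ≠ p.2 ∧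
        T ≤ (G.dist p.1 p.2 : ℝ))).card : ℝ) := by
    rw [card_filter_prod16 (fun p : V × V => p.1 ≠ p.2 ∧ T ≤ (G.dist p.1 p.2 : ℝ))]
    push_cast
    calc nR * (nR - 1) / 2 ≤ nR * nR / 2 := by nlinarith
      _ = ∑ _u : V, nR / 2 := by
          rw [Finset.sum_const, card_univ, nsmul_eq_mul, ← hnRdef]; ring
      _ ≤ _ := Finset.sum_le_sum fun u _ => hfar u
  refine ⟨part1, ?_⟩
  -- Part 2
  have hesp : β / nR ≤ edgeSparsity16 G := by
    refine le_csInf ?_ ?_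
    · obtain ⟨v⟩ := hnV
      refine ⟨_, ⟨{v}, Finset.singleton_nonempty v, ?_, rfl⟩⟩
      intro h
      have hcc := congrArg Finset.card h
      simp only [Finset.card_singleton, card_univ] at hcc
      omega
    · rintro r ⟨A, hA1, hA2, rfl⟩
      exact hcut A hA1 hA2
  have hesp0 : 0 < edgeSparsity16 G := lt_of_lt_of_le (by positivity) hesp
  -- paths exist
  have hpath : ∀ u v : V, Nonempty (G.Path u v) := fun u v =>
    (hpre u v).elim fun w => ⟨w.toPath⟩
  -- an edge exists
  obtain ⟨u0, v0, huv0⟩ := Fintype.exists_pair_of_one_lt_card (α := V) (by omega)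
  have hd0 : 0 < G.dist u0 v0 := (hpre u0 v0).pos_dist_of_ne huv0
  obtain ⟨p0, hp0⟩ := (hpre u0 v0).exists_walk_length_eq_dist
  have hedges0 : p0.edges ≠ [] := by
    intro h
    have h1 : p0.length = 0 := by rw [← SimpleGraph.Walk.length_edges, h]; rfl
    rw [hp0] at h1; omega
  obtain ⟨e0, he0⟩ := List.exists_mem_of_ne_nil _ hedges0
  have he0' : e0 ∈ G.edgeSet := p0.edges_subset_edgeSet he0
  -- edge count bound
  have hm : (G.edgeFinset.card : ℝ) ≤ ((Δ:ℝ)+1) * nR / 2 := by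
    have h2m : 2 * G.edgeFinset.card ≤ Fintype.card V * Δ := by
      have hds := G.sum_degrees_eq_twice_card_edges
      have hb : ∑ v : V, G.degree v ≤ Fintype.card V * Δ := by
        calc ∑ v : V, G.degree v ≤ ∑ _v : V, Δ := Finset.sum_le_sum fun v _ => hdeg v
          _ = Fintype.card V * Δ := by rw [Finset.sum_const, card_univ, smul_eq_mul]
      omega
    have h2m' : (2:ℝ) * (G.edgeFinset.card : ℝ) ≤ nR * (Δ:ℝ) := by
      rw [hnRdef]; exact_mod_cast h2m
    nlinarith [hnR]
  -- far pairs with p.1 < p.2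
  set F := univ.filter (fun p : V × V => p.1 ≠ p.2 ∧ T ≤ (G.dist p.1 p.2 : ℝ)) with hFdef
  set Flt := F.filter (fun p : V × V => p.1 < p.2) with hFltdef
  have hFcard : F.card = 2 * Flt.card := by
    have hsplit := Finset.card_filter_add_card_filter_not
      (s := F) (p := fun p : V × V => p.1 < p.2)
    have hswapc : (F.filter (fun p : V × V => ¬ p.1 < p.2)).card = Flt.card := by
      refine Finset.card_nbij' Prod.swap Prod.swap ?_ ?_ ?_ ?_
      · rintro ⟨a, b⟩ hp
        simp only [Finset.mem_coe, hFltdef, hFdef, mem_filter, mem_univ, true_and, not_lt, Prod.swap] at hp ⊢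
        obtain ⟨⟨hne, hd⟩, hba⟩ := hp
        refine ⟨⟨hne.symm, ?_⟩, lt_of_le_of_ne hba hne.symm⟩
        rwa [SimpleGraph.dist_comm]
      · rintro ⟨a, b⟩ hp
        simp only [Finset.mem_coe, hFltdef, hFdef, mem_filter, mem_univ, true_and, not_lt, Prod.swap] at hp ⊢
        obtain ⟨⟨hne, hd⟩, hab⟩ := hp
        refine ⟨⟨hne.symm, ?_⟩, hab.le⟩
        rwa [SimpleGraph.dist_comm]
      · rintro ⟨a, b⟩ _; rfl
      · rintro ⟨a, b⟩ _; rfl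
    rw [hFltdef] at hswapc ⊢
    omega
  have hFltR : nR * (nR - 1) / 4 ≤ (Flt.card : ℝ) := by
    have hc2 : (F.card : ℝ) = 2 * (Flt.card : ℝ) := by exact_mod_cast hFcard
    have := part1
    rw [hFdef] at hc2
    linarith
  -- per-flow lower bound on max load
  have hflow : ∀ φ : (∀ u v : V, G.Path u v → ℝ), IsUnitFlow16 G φ →
      1/(2*L) * β/(8*((Δ:ℝ)+1)) * Real.log nR * nR / β ≤
        sSup {x : ℝ | ∃ e ∈ G.edgeSet, x = edgeLoad16 G φ e} := by
    intro φ hφ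
    set s := sSup {x : ℝ | ∃ e ∈ G.edgeSet, x = edgeLoad16 G φ e} with hs
    have hLfin : {x : ℝ | ∃ e ∈ G.edgeSet, x = edgeLoad16 G φ e}.Finite := by
      have hsub : {x : ℝ | ∃ e ∈ G.edgeSet, x = edgeLoad16 G φ e} ⊆
          (edgeLoad16 G φ) '' G.edgeSet := by
        rintro x ⟨e, he, rfl⟩; exact ⟨e, he, rfl⟩
      exact ((Set.toFinite G.edgeSet).image _).subset hsub
    have hbdd : BddAbove {x : ℝ | ∃ e ∈ G.edgeSet, x = edgeLoad16 G φ e} := hLfin.bddAbove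
    have hle : ∀ e ∈ G.edgeFinset, edgeLoad16 G φ e ≤ s := fun e he =>
      le_csSup hbdd ⟨e, SimpleGraph.mem_edgeFinset.mp he, rfl⟩
    have hload0 : ∀ e, 0 ≤ edgeLoad16 G φ e := by
      intro e
      refine Finset.sum_nonneg fun p _ => Finset.sum_nonneg fun P _ => ?_
      split
      · exact hφ.1 _ _ _
      · exact le_refl 0
    have hs0 : 0 ≤ s :=
      le_trans (hload0 e0) (hle e0 (SimpleGraph.mem_edgeFinset.mpr he0'))
    have htot_le : ∑ e ∈ G.edgeFinset, edgeLoad16 G φ e ≤ (G.edgeFinset.card : ℝ) * s := by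
      calc ∑ e ∈ G.edgeFinset, edgeLoad16 G φ e ≤ ∑ _e ∈ G.edgeFinset, s :=
            Finset.sum_le_sum hle
        _ = (G.edgeFinset.card : ℝ) * s := by rw [Finset.sum_const, nsmul_eq_mul]
    have hswap : ∑ e ∈ G.edgeFinset, edgeLoad16 G φ e =
        ∑ p ∈ univ.filter (fun p : V × V => p.1 < p.2), ∑ P : G.Path p.1 p.2,
          φ p.1 p.2 P * ((P : G.Walk p.1 p.2).length : ℝ) := by
      unfold edgeLoad16
      rw [Finset.sum_comm]
      refine Finset.sum_congr rfl fun p _ => ?_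
      rw [Finset.sum_comm]
      refine Finset.sum_congr rfl fun P _ => ?_
      rw [← Finset.sum_filter]
      have hfe : G.edgeFinset.filter (fun e => e ∈ (P : G.Walk p.1 p.2).edges)
          = (P : G.Walk p.1 p.2).edges.toFinset := by
        ext e
        simp only [mem_filter, SimpleGraph.mem_edgeFinset, List.mem_toFinset]
        exact ⟨fun h => h.2, fun h => ⟨SimpleGraph.Walk.edges_subset_edgeSet _ h, h⟩⟩
      rw [hfe, Finset.sum_const, List.toFinset_card_of_nodup P.2.isTrail.edges_nodup,
        SimpleGraph.Walk.length_edges, nsmul_eq_mul, mul_comm]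
    have hlow : T * (Flt.card : ℝ) ≤
        ∑ p ∈ univ.filter (fun p : V × V => p.1 < p.2), ∑ P : G.Path p.1 p.2,
          φ p.1 p.2 P * ((P : G.Walk p.1 p.2).length : ℝ) := by
      have hFsub : Flt ⊆ univ.filter (fun p : V × V => p.1 < p.2) := by
        intro p hp
        simp only [hFltdef, hFdef, mem_filter, mem_univ, true_and] at hp ⊢
        exact hp.2
      calc T * (Flt.card : ℝ) = ∑ _p ∈ Flt, T := by
            rw [Finset.sum_const, nsmul_eq_mul, mul_comm]
        _ ≤ ∑ p ∈ Flt, ∑ P : G.Path p.1 p.2,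
              φ p.1 p.2 P * ((P : G.Walk p.1 p.2).length : ℝ) := by
            refine Finset.sum_le_sum fun p hp => ?_
            simp only [hFltdef, hFdef, mem_filter, mem_univ, true_and] at hp
            obtain ⟨⟨hne, hdist⟩, hlt⟩ := hp
            calc T = T * 1 := (mul_one T).symm
              _ ≤ T * ∑ P : G.Path p.1 p.2, φ p.1 p.2 P :=
                  mul_le_mul_of_nonneg_left (hφ.2 p.1 p.2 hlt) hT0.le
              _ = ∑ P : G.Path p.1 p.2, φ p.1 p.2 P * T := by
                  rw [Finset.mul_sum]
                  exact Finset.sum_congr rfl fun P _ => mul_comm _ _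
              _ ≤ ∑ P : G.Path p.1 p.2,
                    φ p.1 p.2 P * ((P : G.Walk p.1 p.2).length : ℝ) := by
                  refine Finset.sum_le_sum fun P _ => ?_
                  refine mul_le_mul_of_nonneg_left ?_ (hφ.1 _ _ _)
                  refine le_trans hdist ?_
                  exact_mod_cast Nat.cast_le.mpr (SimpleGraph.dist_le (P : G.Walk p.1 p.2))
        _ ≤ _ := by
            refine Finset.sum_le_sum_of_subset_of_nonneg hFsub fun p _ _ => ?_
            exact Finset.sum_nonneg fun P _ => mul_nonneg (hφ.1 _ _ _) (Nat.cast_nonneg _)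
    have hcomb : T * (Flt.card : ℝ) ≤ (((Δ:ℝ)+1) * nR / 2) * s := by
      have h7 : (G.edgeFinset.card : ℝ) * s ≤ (((Δ:ℝ)+1) * nR / 2) * s :=
        mul_le_mul_of_nonneg_right hm hs0
      rw [← hswap] at hlow
      linarith
    have hgoal_eq : 1/(2*L) * β/(8*((Δ:ℝ)+1)) * Real.log nR * nR / β
        = T * nR / (8*((Δ:ℝ)+1)) := by
      rw [hTdef]
      have hβ' : β ≠ 0 := ne_of_gt hβ
      have hD' : ((Δ:ℝ)+1) ≠ 0 := by positivity
      rw [show 1/(2*L) * β/(8*((Δ:ℝ)+1)) * Real.log nR * nR / β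
          = (1/(2*L) * Real.log nR) * nR / (8*((Δ:ℝ)+1)) * (β/β) from by ring]
      rw [div_self hβ', mul_one]
    rw [hgoal_eq]
    have hD : (0:ℝ) < (Δ:ℝ)+1 := by positivity
    have h1 : T * (nR*(nR-1)/4) ≤ (((Δ:ℝ)+1) * nR / 2) * s :=
      le_trans (mul_le_mul_of_nonneg_left hFltR hT0.le) hcomb
    have haux : 0 ≤ T * nR * (nR - 2) := by
      apply mul_nonneg (mul_nonneg hT0.le hnR.le); linarith
    have h2 : T * nR * nR / 8 ≤ (((Δ:ℝ)+1) * nR / 2) * s := by linarith [h1, haux]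
    have h5 : T * nR / 8 ≤ ((Δ:ℝ)+1) * s / 2 := by
      have h6 : nR * (T*nR/8) ≤ nR * (((Δ:ℝ)+1)*s/2) := by linarith [h2]
      exact (mul_le_mul_iff_right₀ hnR).mp h6
    have hDs : 0 ≤ (Δ:ℝ) * s := mul_nonneg (Nat.cast_nonneg _) hs0
    rw [div_le_iff₀ (by positivity : (0:ℝ) < 8*((Δ:ℝ)+1))]
    linarith [h5, hDs, hs0]
  -- the trivial unit flow
  have hφ1 : IsUnitFlow16 G (fun _ _ _ => (1:ℝ)) := by
    refine ⟨fun _ _ _ => zero_le_one, fun u v _ => ?_⟩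
    rw [Finset.sum_const, card_univ, nsmul_eq_mul, mul_one]
    haveI := hpath u v
    exact_mod_cast Fintype.card_pos (α := G.Path u v)
  have hcong : 1/(2*L) * β/(8*((Δ:ℝ)+1)) * Real.log nR * nR / β ≤ edgeCongG16 G := by
    refine le_csInf ⟨_, (fun _ _ _ => (1:ℝ)), hφ1, rfl⟩ ?_
    rintro r ⟨φ, hφ, rfl⟩
    exact hflow φ hφ
  have hfinal : 1/(2*L) * β/(8*((Δ:ℝ)+1)) * Real.log nR / edgeSparsity16 G ≤
      1/(2*L) * β/(8*((Δ:ℝ)+1)) * Real.log nR * nR / β := by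
    rw [div_le_div_iff₀ hesp0 hβ]
    calc 1/(2*L) * β/(8*((Δ:ℝ)+1)) * Real.log nR * β
        = (1/(2*L) * β/(8*((Δ:ℝ)+1)) * Real.log nR) * (β/nR) * nR := by
          field_simp
      _ ≤ (1/(2*L) * β/(8*((Δ:ℝ)+1)) * Real.log nR) * edgeSparsity16 G * nR :=
          mul_le_mul_of_nonneg_right
            (mul_le_mul_of_nonneg_left hesp (by positivity)) hnR.le
      _ = 1/(2*L) * β/(8*((Δ:ℝ)+1)) * Real.log nR * nR * edgeSparsity16 G := by ring
  exact le_trans hfinal hcong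
end
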